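/- Let f : ℤ → ℕ∞ with f⁻¹(0) finite, and let u : ℕ → ℤ be a sequence enumerating f (i.e., f(n) = #{k : u_k = n} for all n). Suppose A_1 ⊆ A_2 ⊆ A_3 ⊆ ⋯ is an ascending chain of finite sets of integers such that for all k ≥ 1 and all n ∈ ℤ: r_{A_k,h}(n) ≤ f(n) and r_{A_k,h}(n) ≥ #{i : 1 ≤ i ≤ k, u_i = n}. Then the union A = ⋃_k A_k satisfies r_{A,h}(n) = f(n) for all n ∈ ℤ. -/

import Mathlib

/-- The representation function of order `h` of `A ⊆ ℤ`. -/
noncomputable def repFn (A : Set ℤ) (h : ℕ) (n : ℤ) : ℕ∞ :=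
  {g : Fin h → ℤ | Monotone g ∧ (∀ i, g i ∈ A) ∧ ∑ i, g i = n}.encard

/-- A finite set contained in a monotone countable union lies in one member. -/
lemma finite_subset_mono_iUnion {α : Type*} {S : ℕ → Set α} (hS : Monotone S)
    {t : Set α} (ht : t.Finite) (hsub : t ⊆ ⋃ k, S k) : ∃ k, t ⊆ S k := by
  classical
  choose idx hidx using fun x (hx : x ∈ t) => Set.mem_iUnion.mp (hsub hx)
  refine ⟨ht.toFinset.sup (fun x => if hx : x ∈ t then idx x hx else 0),
    fun x hx => hS ?_ (hidx x hx)⟩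
  have hle := Finset.le_sup (f := fun x => if hx : x ∈ t then idx x hx else 0)
    (ht.mem_toFinset.mpr hx)
  simpa only [dif_pos hx] using hle

/-- The encard of a monotone union is the sup of the encards. -/
lemma encard_mono_iUnion {α : Type*} {S : ℕ → Set α} (hS : Monotone S) :
    (⋃ k, S k).encard = ⨆ k, (S k).encard := by
  refine le_antisymm ?_ (iSup_le fun k => Set.encard_mono (Set.subset_iUnion S k))
  by_cases htop : (⨆ k, (S k).encard) = ⊤
  · simp [htop]
  · obtain ⟨m, hm⟩ := WithTop.ne_top_iff_exists.mp htop
    rw [← hm]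
    by_contra hlt
    have h1 : (m + 1 : ℕ∞) ≤ (⋃ k, S k).encard :=
      Order.add_one_le_of_lt (lt_of_not_ge hlt)
    obtain ⟨t, hts, htm⟩ := Set.exists_subset_encard_eq h1
    have htfin : t.Finite := Set.finite_of_encard_eq_coe (k := m + 1) (by exact_mod_cast htm)
    obtain ⟨k, hk⟩ := finite_subset_mono_iUnion hS htfin hts
    have : (m + 1 : ℕ∞) ≤ m := by
      calc (m + 1 : ℕ∞) = t.encard := htm.symm
        _ ≤ (S k).encard := Set.encard_mono hk
        _ ≤ ⨆ k, (S k).encard := le_iSup (fun k => (S k).encard) k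
        _ = m := hm.symm
    replace this : m + 1 ≤ m := by exact_mod_cast this
    exact absurd this (by simp [ENat.add_one_le_iff])

lemma repFn_mono {A B : Set ℤ} (hAB : A ⊆ B) (h : ℕ) (n : ℤ) :
    repFn A h n ≤ repFn B h n :=
  Set.encard_mono fun g hg => ⟨hg.1, fun i => hAB (hg.2.1 i), hg.2.2⟩

theorem union_has_representation_function (h : ℕ)
    (f : ℤ → ℕ∞) (hf : (f ⁻¹' {0}).Finite)
    (u : ℕ → ℤ)
    (hu : ∀ n : ℤ, {k : ℕ | 1 ≤ k ∧ u k = n}.encard = f n)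
    (A : ℕ → Set ℤ)
    (hfin : ∀ k : ℕ, 1 ≤ k → (A k).Finite)
    (hchain : ∀ k : ℕ, 1 ≤ k → A k ⊆ A (k + 1))
    (hle : ∀ k : ℕ, 1 ≤ k → ∀ n : ℤ, repFn (A k) h n ≤ f n)
    (hge : ∀ k : ℕ, 1 ≤ k → ∀ n : ℤ,
      {i : ℕ | 1 ≤ i ∧ i ≤ k ∧ u i = n}.encard ≤ repFn (A k) h n) :
    ∀ n : ℤ, repFn (⋃ k ∈ {k : ℕ | 1 ≤ k}, A k) h n = f n := by
  intro n
  set B : ℕ → Set ℤ := fun k => A (k + 1) with hB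
  have hBmono : Monotone B := monotone_nat_of_le_succ fun k => hchain (k + 1) (by omega)
  have hU : (⋃ k ∈ {k : ℕ | 1 ≤ k}, A k) = ⋃ k, B k := by
    ext x
    simp only [Set.mem_iUnion, Set.mem_setOf_eq, hB]
    constructor
    · rintro ⟨k, hk, hx⟩
      exact ⟨k - 1, by rwa [Nat.sub_add_cancel hk]⟩
    · rintro ⟨k, hx⟩
      exact ⟨k + 1, by omega, hx⟩
  rw [hU]
  -- the representation set of the union is the monotone union of the representation sets
  have hrep : repFn (⋃ k, B k) h n = ⨆ k, repFn (B k) h n := by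
    have hRmono : Monotone fun k =>
        {g : Fin h → ℤ | Monotone g ∧ (∀ i, g i ∈ B k) ∧ ∑ i, g i = n} := by
      intro j k hjk g hg
      exact ⟨hg.1, fun i => hBmono hjk (hg.2.1 i), hg.2.2⟩
    have hRU : {g : Fin h → ℤ | Monotone g ∧ (∀ i, g i ∈ ⋃ k, B k) ∧ ∑ i, g i = n}
        = ⋃ k, {g : Fin h → ℤ | Monotone g ∧ (∀ i, g i ∈ B k) ∧ ∑ i, g i = n} := by
      ext g
      constructor
      · rintro ⟨hmg, hmem, hsum⟩
        obtain ⟨k, hk⟩ := finite_subset_mono_iUnion hBmono (Set.finite_range g)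
          (by rintro x ⟨i, rfl⟩; exact hmem i)
        exact Set.mem_iUnion.mpr ⟨k, hmg, fun i => hk ⟨i, rfl⟩, hsum⟩
      · intro hg
        obtain ⟨k, hmg, hmem, hsum⟩ := Set.mem_iUnion.mp hg
        exact ⟨hmg, fun i => Set.mem_iUnion.mpr ⟨k, hmem i⟩, hsum⟩
    rw [repFn, hRU, encard_mono_iUnion hRmono]
    rfl
  rw [hrep]
  refine le_antisymm (iSup_le fun k => hle (k + 1) (by omega) n) ?_
  -- lower bound: f n = sup of truncated counting sets
  have hT : {i : ℕ | 1 ≤ i ∧ u i = n} = ⋃ k, {i : ℕ | 1 ≤ i ∧ i ≤ k ∧ u i = n} := by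
    ext i
    simp only [Set.mem_iUnion, Set.mem_setOf_eq]
    exact ⟨fun ⟨h1, h2⟩ => ⟨i, h1, le_refl i, h2⟩, fun ⟨k, h1, _, h2⟩ => ⟨h1, h2⟩⟩
  have hTmono : Monotone fun k => {i : ℕ | 1 ≤ i ∧ i ≤ k ∧ u i = n} := by
    intro j k hjk i hi
    exact ⟨hi.1, hi.2.1.trans hjk, hi.2.2⟩
  rw [← hu n, hT, encard_mono_iUnion hTmono]
  refine iSup_le fun k => ?_
  rcases Nat.eq_zero_or_pos k with rfl | hk
  · have h0 : {i : ℕ | 1 ≤ i ∧ i ≤ 0 ∧ u i = n}.encard = 0 := by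
      rw [Set.encard_eq_zero]
      ext i; simp only [Set.mem_setOf_eq, Set.mem_empty_iff_false, iff_false]; omega
    rw [h0]; exact zero_le
  · calc {i : ℕ | 1 ≤ i ∧ i ≤ k ∧ u i = n}.encard
        ≤ repFn (A k) h n := hge k hk n
      _ = repFn (B (k - 1)) h n := by
          have : B (k - 1) = A k := by
            simp only [hB]; rw [Nat.sub_add_cancel hk]
          rw [this]
      _ ≤ ⨆ k, repFn (B k) h n := le_iSup (fun k => repFn (B k) h n) (k - 1)
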